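/- arXiv:1003.5248 — 2 statements merged into one kernel-verified Lean document; each statement's English description precedes it below -/
import Mathlib

section
/- Let 0 < λ < N, let B = {x ∈ ℝ^N : |x−a| < r} be an open ball, and let Θ_B be the associated inversion operator with parameter λ. Then for every f ∈ L^{2N/(2N−λ)}(ℝ^N) one has I_λ[Θ_B f] = I_λ[f], i.e. ∬ conj((Θ_B f)(x)) (Θ_B f)(y) |x−y|^{−λ} dx dy = ∬ conj(f(x)) f(y) |x−y|^{−λ} dx dy. -/
open MeasureTheory ENNReal EuclideanGeometry Set Metric Module


open MeasureTheory ENNReal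

/-- The functional `I_λ[f,g] = ∬ conj(f(x)) g(y) |x-y|^{-λ} dx dy` on `ℝ^N`. -/
noncomputable def Ilam (N : ℕ) (lam : ℝ)
    (f g : EuclideanSpace ℝ (Fin N) → ℂ) : ℂ :=
  ∫ x, ∫ y, (starRingEnd ℂ) (f x) * g y * (((‖x - y‖ : ℝ) ^ (-lam) : ℝ) : ℂ)

/-- The inversion operator `Θ_B` associated with the ball `B = {|x-a| < r}`:
`(Θ_B f)(x) = (r/|x-a|)^{2N-λ} f(r²(x-a)/|x-a|² + a)`. -/
noncomputable def invOp (N : ℕ) (lam : ℝ) (a : EuclideanSpace ℝ (Fin N)) (r : ℝ)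
    (f : EuclideanSpace ℝ (Fin N) → ℂ) : EuclideanSpace ℝ (Fin N) → ℂ :=
  fun x => (((r / ‖x - a‖ : ℝ) ^ (2 * (N : ℝ) - lam) : ℝ) : ℂ) *
    f ((r ^ 2 / ‖x - a‖ ^ 2) • (x - a) + a)

variable {N : ℕ}

local notation "E" => EuclideanSpace ℝ (Fin N)

noncomputable def invDeriv (N : ℕ) (a : EuclideanSpace ℝ (Fin N)) (r : ℝ)
    (x : EuclideanSpace ℝ (Fin N)) :
    EuclideanSpace ℝ (Fin N) →L[ℝ] EuclideanSpace ℝ (Fin N) :=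
  (r / dist x a) ^ 2 • ((ℝ ∙ (x - a))ᗮ.reflection :
    EuclideanSpace ℝ (Fin N) →L[ℝ] EuclideanSpace ℝ (Fin N))

lemma abs_det_invDeriv (a : E) (r : ℝ) (hr : 0 < r) {x : E} (hx : x ≠ a) :
    |(invDeriv N a r x).det| = (r / ‖x - a‖) ^ (2 * N) := by
  have hxa : x - a ≠ 0 := sub_ne_zero.2 hx
  have h1 : (invDeriv N a r x).det
      = ((r / dist x a) ^ 2) ^ finrank ℝ (EuclideanSpace ℝ (Fin N)) *
        LinearMap.det (ℝ ∙ (x - a))ᗮ.reflection.toLinearMap := by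
    rw [ContinuousLinearMap.det, invDeriv, ContinuousLinearMap.coe_smul, LinearMap.det_smul]
    rfl
  rw [h1, Submodule.det_reflection, Submodule.orthogonal_orthogonal, finrank_span_singleton hxa,
    finrank_euclideanSpace_fin, pow_one, dist_eq_norm]
  rw [abs_mul, abs_neg, abs_one, mul_one, ← pow_mul, abs_pow, abs_of_nonneg
    (div_nonneg hr.le (norm_nonneg _)), mul_comm 2 N, pow_mul, ← pow_mul, mul_comm N 2]

lemma compl_singleton_ae_univ (hN : 1 ≤ N) (a : E) :
    ({a}ᶜ : Set (EuclideanSpace ℝ (Fin N))) =ᵐ[volume] univ := by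
  haveI : Nonempty (Fin N) := Fin.pos_iff_nonempty.1 hN
  haveI : Nontrivial (EuclideanSpace ℝ (Fin N)) := inferInstance
  rw [ae_eq_univ, compl_compl]
  exact measure_singleton a

lemma integral_inversion (hN : 1 ≤ N) (a : E) (r : ℝ) (hr : 0 < r) (g : E → ℂ) :
    ∫ x, g x = ∫ x in {a}ᶜ,
      (((r / ‖x - a‖) ^ (2 * N) : ℝ)) • g (inversion a r x) := by
  have hs : MeasurableSet ({a}ᶜ : Set (EuclideanSpace ℝ (Fin N))) :=
    (measurableSet_singleton a).compl
  have himg : inversion a r '' ({a}ᶜ : Set (EuclideanSpace ℝ (Fin N))) = {a}ᶜ := by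
    apply Set.eq_of_subset_of_subset
    · rintro _ ⟨x, hx, rfl⟩
      simpa [mem_compl_singleton_iff, inversion_eq_center hr.ne'] using hx
    · intro x hx
      exact ⟨inversion a r x,
        by simpa [mem_compl_singleton_iff, inversion_eq_center hr.ne'] using hx,
        inversion_inversion a hr.ne' x⟩
  calc ∫ x, g x = ∫ x in inversion a r '' {a}ᶜ, g x := by
        rw [himg, setIntegral_congr_set (compl_singleton_ae_univ hN a), setIntegral_univ]
    _ = ∫ x in {a}ᶜ, |(invDeriv N a r x).det| • g (inversion a r x) :=
        integral_image_eq_integral_abs_det_fderiv_smul volume hs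
          (fun x hx => (hasFDerivAt_inversion
            (mem_compl_singleton_iff.1 hx)).hasFDerivWithinAt)
          ((inversion_injective a hr.ne').injOn) g
    _ = _ := setIntegral_congr_fun hs (fun x hx => by
        rw [abs_det_invDeriv a r hr (mem_compl_singleton_iff.1 hx)])

lemma scalar_key (N : ℕ) (lam r px py d : ℝ) (hr : 0 < r) (hx : 0 < px) (hy : 0 < py)
    (hd : 0 ≤ d) :
    ((r / px) ^ (2 * N)) * ((r / py) ^ (2 * N)) * ((px / r) ^ (2 * (N : ℝ) - lam)) *
      ((py / r) ^ (2 * (N : ℝ) - lam)) * ((r ^ 2 / (px * py) * d) ^ (-lam)) = d ^ (-lam) := by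
  have hcx : (0:ℝ) < r / px := div_pos hr hx
  have hcy : (0:ℝ) < r / py := div_pos hr hy
  have key : ∀ c : ℝ, 0 < c → (c ^ (2 * N)) * (c⁻¹ ^ (2 * (N : ℝ) - lam)) = c ^ lam := by
    intro c hc
    rw [Real.inv_rpow hc.le, ← Real.rpow_neg hc.le, ← Real.rpow_natCast c (2 * N),
      ← Real.rpow_add hc]
    congr 1
    push_cast
    ring
  have hsplit : (r ^ 2 / (px * py) * d) ^ (-lam)
      = ((r / px) * (r / py)) ^ (-lam) * d ^ (-lam) := by
    rw [show r ^ 2 / (px * py) = (r / px) * (r / py) by field_simp,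
      Real.mul_rpow (by positivity) hd]
  have hinv1 : px / r = (r / px)⁻¹ := (inv_div r px).symm
  have hinv2 : py / r = (r / py)⁻¹ := (inv_div r py).symm
  rw [hsplit, hinv1, hinv2]
  have e1 := key _ hcx
  have e2 := key _ hcy
  calc ((r / px) ^ (2 * N)) * ((r / py) ^ (2 * N)) * ((r / px)⁻¹ ^ (2 * (N : ℝ) - lam)) *
      ((r / py)⁻¹ ^ (2 * (N : ℝ) - lam)) * (((r / px) * (r / py)) ^ (-lam) * d ^ (-lam))
      = ((r / px) ^ lam * (r / py) ^ lam * ((r / px) * (r / py)) ^ (-lam)) * d ^ (-lam) := by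
        rw [← e1, ← e2]; ring
    _ = d ^ (-lam) := by
        rw [← Real.mul_rpow hcx.le hcy.le, ← Real.rpow_add (mul_pos hcx hcy), add_neg_cancel,
          Real.rpow_zero, one_mul]

lemma invOp_apply (N : ℕ) (lam : ℝ) (a : EuclideanSpace ℝ (Fin N)) (r : ℝ)
    (f : EuclideanSpace ℝ (Fin N) → ℂ) (x : EuclideanSpace ℝ (Fin N)) :
    invOp N lam a r f x =
      (((r / ‖x - a‖ : ℝ) ^ (2 * (N : ℝ) - lam) : ℝ) : ℂ) * f (inversion a r x) := by
  simp only [invOp, inversion_def, vsub_eq_sub, vadd_eq_add, dist_eq_norm, div_pow]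

lemma pointwise_key (hN : 1 ≤ N) (lam : ℝ) (a : E) (r : ℝ) (hr : 0 < r)
    (f : E → ℂ) {x y : E} (hx : x ≠ a) (hy : y ≠ a) :
    (((r / ‖x - a‖) ^ (2 * N) : ℝ)) • ((((r / ‖y - a‖) ^ (2 * N) : ℝ)) •
      ((starRingEnd ℂ) (invOp N lam a r f (inversion a r x)) *
        invOp N lam a r f (inversion a r y) *
        (((‖inversion a r x - inversion a r y‖ : ℝ) ^ (-lam) : ℝ) : ℂ)))
    = (starRingEnd ℂ) (f x) * f y * (((‖x - y‖ : ℝ) ^ (-lam) : ℝ) : ℂ) := by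
  have hpx : (0:ℝ) < ‖x - a‖ := by
    rw [norm_pos_iff]; exact sub_ne_zero.2 hx
  have hpy : (0:ℝ) < ‖y - a‖ := by
    rw [norm_pos_iff]; exact sub_ne_zero.2 hy
  have h1x : ‖inversion a r x - a‖ = r ^ 2 / ‖x - a‖ := by
    rw [← dist_eq_norm, ← dist_eq_norm, dist_inversion_center]
  have h1y : ‖inversion a r y - a‖ = r ^ 2 / ‖y - a‖ := by
    rw [← dist_eq_norm, ← dist_eq_norm, dist_inversion_center]
  have h2x : inversion a r (inversion a r x) = x := inversion_inversion a hr.ne' x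
  have h2y : inversion a r (inversion a r y) = y := inversion_inversion a hr.ne' y
  have h3x : r / (r ^ 2 / ‖x - a‖) = ‖x - a‖ / r := by
    field_simp
  have h3y : r / (r ^ 2 / ‖y - a‖) = ‖y - a‖ / r := by
    field_simp
  have h4 : ‖inversion a r x - inversion a r y‖
      = r ^ 2 / (‖x - a‖ * ‖y - a‖) * ‖x - y‖ := by
    simp only [← dist_eq_norm]
    exact dist_inversion_inversion hx hy r
  have hkey := scalar_key N lam r ‖x - a‖ ‖y - a‖ ‖x - y‖ hr hpx hpy (norm_nonneg _)
  rw [invOp_apply, invOp_apply, h1x, h1y, h2x, h2y, h3x, h3y, h4, map_mul,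
    Complex.conj_ofReal]
  calc (((r / ‖x - a‖) ^ (2 * N) : ℝ)) • ((((r / ‖y - a‖) ^ (2 * N) : ℝ)) •
      ((((‖x - a‖ / r : ℝ) ^ (2 * (N : ℝ) - lam) : ℝ) : ℂ) * (starRingEnd ℂ) (f x) *
        ((((‖y - a‖ / r : ℝ) ^ (2 * (N : ℝ) - lam) : ℝ) : ℂ) * f y) *
        (((r ^ 2 / (‖x - a‖ * ‖y - a‖) * ‖x - y‖ : ℝ) ^ (-lam) : ℝ) : ℂ)))
      = ((((r / ‖x - a‖) ^ (2 * N)) * ((r / ‖y - a‖) ^ (2 * N)) *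
          ((‖x - a‖ / r) ^ (2 * (N : ℝ) - lam)) * ((‖y - a‖ / r) ^ (2 * (N : ℝ) - lam)) *
          ((r ^ 2 / (‖x - a‖ * ‖y - a‖) * ‖x - y‖) ^ (-lam)) : ℝ) : ℂ) *
          ((starRingEnd ℂ) (f x) * f y) := by
        simp only [Complex.real_smul]
        push_cast
        ring
    _ = (starRingEnd ℂ) (f x) * f y * (((‖x - y‖ : ℝ) ^ (-lam) : ℝ) : ℂ) := by
        rw [hkey]; ring


/-- Conformal invariance of `I_λ` under inversion in a sphere:
`I_λ[Θ_B f] = I_λ[f]` for every `f ∈ L^{2N/(2N-λ)}`. -/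
theorem conformal_invariance_inversion (N : ℕ) (hN : 1 ≤ N) (lam : ℝ)
    (hlam0 : 0 < lam) (hlamN : lam < N)
    (a : EuclideanSpace ℝ (Fin N)) (r : ℝ) (hr : 0 < r)
    (f : EuclideanSpace ℝ (Fin N) → ℂ)
    (hf : MemLp f (ENNReal.ofReal (2 * N / (2 * N - lam))) volume) :
    Ilam N lam (invOp N lam a r f) (invOp N lam a r f) = Ilam N lam f f := by
  have hs : MeasurableSet ({a}ᶜ : Set (EuclideanSpace ℝ (Fin N))) :=
    (measurableSet_singleton a).compl
  unfold Ilam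
  calc (∫ x, ∫ y, (starRingEnd ℂ) (invOp N lam a r f x) * invOp N lam a r f y *
        (((‖x - y‖ : ℝ) ^ (-lam) : ℝ) : ℂ))
      = ∫ x in {a}ᶜ, (((r / ‖x - a‖) ^ (2 * N) : ℝ)) •
          ∫ y, (starRingEnd ℂ) (invOp N lam a r f (inversion a r x)) * invOp N lam a r f y *
            (((‖inversion a r x - y‖ : ℝ) ^ (-lam) : ℝ) : ℂ) :=
        integral_inversion hN a r hr _
    _ = ∫ x in {a}ᶜ, ∫ y, (starRingEnd ℂ) (f x) * f y *
          (((‖x - y‖ : ℝ) ^ (-lam) : ℝ) : ℂ) := by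
        refine setIntegral_congr_fun hs (fun x hxmem => ?_)
        have hx : x ≠ a := mem_compl_singleton_iff.1 hxmem
        rw [integral_inversion hN a r hr
          (fun y => (starRingEnd ℂ) (invOp N lam a r f (inversion a r x)) *
            invOp N lam a r f y * (((‖inversion a r x - y‖ : ℝ) ^ (-lam) : ℝ) : ℂ)),
          ← integral_smul]
        calc (∫ y in {a}ᶜ, (((r / ‖x - a‖) ^ (2 * N) : ℝ)) •
              ((((r / ‖y - a‖) ^ (2 * N) : ℝ)) •
                ((starRingEnd ℂ) (invOp N lam a r f (inversion a r x)) *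
                  invOp N lam a r f (inversion a r y) *
                  (((‖inversion a r x - inversion a r y‖ : ℝ) ^ (-lam) : ℝ) : ℂ))))
            = ∫ y in {a}ᶜ, (starRingEnd ℂ) (f x) * f y *
                (((‖x - y‖ : ℝ) ^ (-lam) : ℝ) : ℂ) :=
              setIntegral_congr_fun hs (fun y hymem =>
                pointwise_key hN lam a r hr f hx (mem_compl_singleton_iff.1 hymem))
          _ = ∫ y, (starRingEnd ℂ) (f x) * f y * (((‖x - y‖ : ℝ) ^ (-lam) : ℝ) : ℂ) := by
              rw [setIntegral_congr_set (compl_singleton_ae_univ hN a), setIntegral_univ]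
    _ = ∫ x, ∫ y, (starRingEnd ℂ) (f x) * f y * (((‖x - y‖ : ℝ) ^ (-lam) : ℝ) : ℂ) := by
        rw [setIntegral_congr_set (compl_singleton_ae_univ hN a), setIntegral_univ]
end

section
/- Let f ∈ L^1(ℝ) be supported in [0, ∞) with ∫_0^∞ f(x) dx = 0 (and with ∬ |f(x)||f(y)| |log(x+y)| dx dy < ∞). Then ∫_0^∞ ∫_0^∞ conj(f(x)) log(1/(x+y)) f(y) dx dy = ∫_0^∞ τ^{−1} | ∫_0^∞ e^{−τx} f(x) dx |² dτ. In particular the left-hand side is real and non-negative, and it is strictly positive unless f = 0 a.e. -/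
open MeasureTheory ENNReal

open Set Filter Real
open scoped Polynomial

set_option maxHeartbeats 1000000

noncomputable section HLRAux



/-- interval integral of `exp (-(τ*σ))` in `σ` -/
lemma integral_exp_kernel (τ : ℝ) (hτ : 0 < τ) (a b : ℝ) :
    ∫ σ in a..b, Real.exp (-(τ * σ)) =
      (Real.exp (-(τ * a)) - Real.exp (-(τ * b))) / τ := by
  have hd : ∀ σ ∈ Set.uIcc a b, HasDerivAt (fun s => -Real.exp (-(τ * s)) / τ)
      (Real.exp (-(τ * σ))) σ := by
    intro σ _
    have h1 : HasDerivAt (fun s : ℝ => -(τ * s)) (-τ) σ := by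
      simpa using ((hasDerivAt_id σ).const_mul τ).fun_neg
    have h2 := (h1.exp).fun_neg.div_const τ
    refine h2.congr_deriv ?_
    field_simp
  have hint : IntervalIntegrable (fun σ => Real.exp (-(τ * σ))) volume a b :=
    (Real.continuous_exp.comp (by continuity)).intervalIntegrable a b
  rw [intervalIntegral.integral_eq_sub_of_hasDerivAt hd hint]
  ring

/-- `∫_{Ioi c} exp (-(τ*x)) dx = exp (-(τ*c))/τ` -/
lemma integral_exp_Ioi (τ : ℝ) (hτ : 0 < τ) (c : ℝ) :
    ∫ x in Ioi c, Real.exp (-(τ * x)) = Real.exp (-(τ * c)) / τ := by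
  have h := MeasureTheory.integral_comp_mul_left_Ioi (fun x => Real.exp (-x)) c hτ
  rw [show (fun x : ℝ => Real.exp (-(τ * x))) = fun x : ℝ => Real.exp (-(τ * x)) from rfl]
  calc ∫ x in Ioi c, Real.exp (-(τ * x)) = τ⁻¹ • ∫ x in Ioi (τ * c), Real.exp (-x) := h
    _ = Real.exp (-(τ * c)) / τ := by
        rw [integral_exp_neg_Ioi, smul_eq_mul]; ring

lemma integrableOn_exp_Ioi (τ : ℝ) (hτ : 0 < τ) (c : ℝ) :
    IntegrableOn (fun x => Real.exp (-(τ * x))) (Ioi c) volume := by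
  simpa [neg_mul] using exp_neg_integrableOn_Ioi c hτ

/-- pointwise bound `(exp(-(τ*a)) - exp(-(τ*b)))/τ ≤ (b-a) * exp(-(τ*a))` -/
lemma kernel_bound {a b τ : ℝ} (hab : a ≤ b) (hτ : 0 < τ) :
    (Real.exp (-(τ * a)) - Real.exp (-(τ * b))) / τ ≤ (b - a) * Real.exp (-(τ * a)) := by
  rw [div_le_iff₀ hτ]
  have h1 : Real.exp (-(τ * b)) = Real.exp (-(τ * a)) * Real.exp (-(τ * (b - a))) := by
    rw [← Real.exp_add]; ring_nf
  rw [h1]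
  have h2 : 1 - τ * (b - a) ≤ Real.exp (-(τ * (b - a))) := by
    have := Real.add_one_le_exp (-(τ * (b - a))); linarith
  have h3 : 0 < Real.exp (-(τ * a)) := Real.exp_pos _
  nlinarith [Real.exp_pos (-(τ * (b-a)))]

lemma kernel_nonneg {a b τ : ℝ} (hab : a ≤ b) (hτ : 0 < τ) :
    0 ≤ (Real.exp (-(τ * a)) - Real.exp (-(τ * b))) / τ := by
  apply div_nonneg _ hτ.le
  have : Real.exp (-(τ * b)) ≤ Real.exp (-(τ * a)) :=
    Real.exp_le_exp.2 (by nlinarith)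
  linarith

/-- Frullani: integrability and value. -/
lemma frullani {a b : ℝ} (ha : 0 < a) (hab : a ≤ b) :
    IntegrableOn (fun τ => (Real.exp (-(τ * a)) - Real.exp (-(τ * b))) / τ) (Ioi 0) volume ∧
    ∫ τ in Ioi 0, (Real.exp (-(τ * a)) - Real.exp (-(τ * b))) / τ = Real.log b - Real.log a := by
  have hb : 0 < b := lt_of_lt_of_le ha hab
  set k : ℝ → ℝ := fun τ => (Real.exp (-(τ * a)) - Real.exp (-(τ * b))) / τ with hk
  -- integrability of k on Ioi 0
  have hkint : IntegrableOn k (Ioi 0) volume := by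
    apply Integrable.mono' (((integrableOn_exp_Ioi a ha 0)).const_mul (b - a))
    · exact (Measurable.div (by measurability) measurable_id).aestronglyMeasurable
    · filter_upwards [ae_restrict_mem measurableSet_Ioi] with τ (hτ : 0 < τ)
      rw [Real.norm_eq_abs, abs_of_nonneg (kernel_nonneg hab hτ)]
      simpa [mul_comm] using kernel_bound hab hτ
  refine ⟨hkint, ?_⟩
  -- Fubini on (Ioi 0) × (Ioc a b)
  set μ1 : Measure ℝ := volume.restrict (Ioi 0)
  set μ2 : Measure ℝ := volume.restrict (Ioc a b)
  have hGm : AEStronglyMeasurable (fun p : ℝ × ℝ => Real.exp (-(p.1 * p.2))) (μ1.prod μ2) :=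
    (Real.continuous_exp.comp (by continuity)).aestronglyMeasurable
  have hsec : ∀ τ : ℝ, 0 < τ →
      ∫ σ in Ioc a b, Real.exp (-(τ * σ)) = k τ := by
    intro τ hτ
    rw [← intervalIntegral.integral_of_le hab, integral_exp_kernel τ hτ]
  have hGint : Integrable (fun p : ℝ × ℝ => Real.exp (-(p.1 * p.2))) (μ1.prod μ2) := by
    rw [integrable_prod_iff hGm]
    constructor
    · filter_upwards [ae_restrict_mem measurableSet_Ioi] with τ (hτ : 0 < τ)
      exact (Real.continuous_exp.comp (by continuity)).integrableOn_Ioc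
    · apply Integrable.congr hkint
      filter_upwards [ae_restrict_mem measurableSet_Ioi] with τ (hτ : 0 < τ)
      rw [← hsec τ hτ]
      refine setIntegral_congr_fun measurableSet_Ioc (fun σ _ => ?_) |>.symm
      simp [Real.norm_eq_abs, abs_of_nonneg (Real.exp_pos _).le]
  have hswap := MeasureTheory.integral_integral_swap (f := fun τ σ => Real.exp (-(τ * σ)))
    (μ := μ1) (ν := μ2) hGint
  have hL : ∫ τ, (∫ σ, Real.exp (-(τ * σ)) ∂μ2) ∂μ1 = ∫ τ in Ioi 0, k τ := by
    refine setIntegral_congr_ae measurableSet_Ioi ?_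
    filter_upwards with τ hτ using hsec τ hτ
  have hR : ∫ σ, (∫ τ, Real.exp (-(τ * σ)) ∂μ1) ∂μ2 = Real.log b - Real.log a := by
    have : ∀ σ ∈ Ioc a b, (∫ τ in Ioi 0, Real.exp (-(τ * σ))) = σ⁻¹ := by
      intro σ hσ
      have hσ0 : 0 < σ := lt_of_lt_of_le ha hσ.1.le
      have := integral_exp_Ioi σ hσ0 0
      simp only [mul_zero, neg_zero, Real.exp_zero] at this
      rw [show (fun x => Real.exp (-(σ * x))) = fun x => Real.exp (-(x * σ)) by
        funext x; ring_nf] at this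
      rw [this, one_div]
    rw [setIntegral_congr_fun measurableSet_Ioc this,
      ← intervalIntegral.integral_of_le hab, integral_inv (by
        rw [Set.uIcc_of_le hab]; rintro ⟨h0, -⟩; linarith), Real.log_div hb.ne' ha.ne']
  rw [← hL, hswap, hR]


/-- the kernel `(exp(-(τ*c)) - exp(-τ))/τ` -/
def hlrK (c τ : ℝ) : ℝ := (Real.exp (-(τ * c)) - Real.exp (-τ)) / τ

lemma hlrK_props {c : ℝ} (hc : 0 < c) :
    IntegrableOn (hlrK c) (Ioi 0) volume ∧
    (∫ τ in Ioi 0, hlrK c τ) = -Real.log c ∧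
    (∫ τ in Ioi 0, |hlrK c τ|) = |Real.log c| := by
  rcases le_or_gt c 1 with h1 | h1
  · have hF := frullani hc h1
    have he : ∀ τ : ℝ, hlrK c τ = (Real.exp (-(τ * c)) - Real.exp (-(τ * 1))) / τ := by
      intro τ; simp [hlrK]
    have hint : IntegrableOn (hlrK c) (Ioi 0) volume := by
      apply hF.1.congr; filter_upwards with τ using (he τ).symm
    refine ⟨hint, ?_, ?_⟩
    · rw [show (∫ τ in Ioi 0, hlrK c τ)
        = ∫ τ in Ioi 0, (Real.exp (-(τ * c)) - Real.exp (-(τ * 1))) / τ from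
        integral_congr_ae (by filter_upwards with τ using he τ), hF.2]
      simp
    · have : ∫ τ in Ioi 0, |hlrK c τ| = ∫ τ in Ioi 0, hlrK c τ := by
        refine setIntegral_congr_ae measurableSet_Ioi ?_
        filter_upwards with τ hτ
        rw [he τ, abs_of_nonneg (kernel_nonneg h1 hτ)]
      rw [this, show (∫ τ in Ioi 0, hlrK c τ)
        = ∫ τ in Ioi 0, (Real.exp (-(τ * c)) - Real.exp (-(τ * 1))) / τ from
        integral_congr_ae (by filter_upwards with τ using he τ), hF.2]
      simp only [Real.log_one]
      rw [abs_of_nonpos (Real.log_nonpos hc.le h1)]; ring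
  · have hF := frullani one_pos h1.le
    have he : ∀ τ : ℝ, hlrK c τ = -((Real.exp (-(τ * 1)) - Real.exp (-(τ * c))) / τ) := by
      intro τ; simp [hlrK]; ring
    have hint : IntegrableOn (hlrK c) (Ioi 0) volume := by
      apply hF.1.neg.congr; filter_upwards with τ using (he τ).symm
    refine ⟨hint, ?_, ?_⟩
    · rw [show (∫ τ in Ioi 0, hlrK c τ)
        = ∫ τ in Ioi 0, -((Real.exp (-(τ * 1)) - Real.exp (-(τ * c))) / τ) from
        integral_congr_ae (by filter_upwards with τ using he τ), integral_neg, hF.2]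
      simp
    · have : ∫ τ in Ioi 0, |hlrK c τ| =
          ∫ τ in Ioi 0, (Real.exp (-(τ * 1)) - Real.exp (-(τ * c))) / τ := by
        refine setIntegral_congr_ae measurableSet_Ioi ?_
        filter_upwards with τ hτ
        rw [he τ, abs_neg, abs_of_nonneg (kernel_nonneg h1.le hτ)]
      rw [this, hF.2]
      simp only [Real.log_one]
      rw [abs_of_nonneg (Real.log_nonneg h1.le)]; ring



lemma moments_zero (φ : ℝ → ℝ) (hφ : ContinuousOn φ (Icc 0 1))
    (h : ∀ n : ℕ, ∫ u in Ioo (0:ℝ) 1, u ^ n * φ u = 0) :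
    ∀ u ∈ Icc (0:ℝ) 1, φ u = 0 := by
  have hIφ : IntegrableOn φ (Ioo 0 1) volume :=
    (hφ.integrableOn_Icc).mono_set Ioo_subset_Icc_self
  have hmon : ∀ n : ℕ, IntegrableOn (fun u => u ^ n * φ u) (Ioo (0:ℝ) 1) volume := by
    intro n
    exact (((continuous_pow n).continuousOn.mul hφ).integrableOn_Icc).mono_set
      Ioo_subset_Icc_self
  -- polynomials
  have hpoly : ∀ p : ℝ[X], ∫ u in Ioo (0:ℝ) 1, p.eval u * φ u = 0 := by
    intro p
    have : ∀ u : ℝ, p.eval u * φ u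
        = ∑ i ∈ Finset.range (p.natDegree + 1), p.coeff i * (u ^ i * φ u) := by
      intro u
      rw [Polynomial.eval_eq_sum_range, Finset.sum_mul]
      exact Finset.sum_congr rfl fun i _ => by ring
    simp only [this]
    rw [integral_finset_sum]
    · refine Finset.sum_eq_zero fun i _ => ?_
      rw [MeasureTheory.integral_const_mul, h i, mul_zero]
    · exact fun i _ => ((hmon i).const_mul _)
  -- square integral is zero
  have hsqint : IntegrableOn (fun u => φ u ^ 2) (Ioo (0:ℝ) 1) volume :=
    ((hφ.pow 2).integrableOn_Icc).mono_set Ioo_subset_Icc_self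
  have hsq : ∫ u in Ioo (0:ℝ) 1, φ u ^ 2 = 0 := by
    have hnn : 0 ≤ ∫ u in Ioo (0:ℝ) 1, φ u ^ 2 :=
      setIntegral_nonneg measurableSet_Ioo fun u _ => sq_nonneg _
    have hCnn : 0 ≤ ∫ u in Ioo (0:ℝ) 1, |φ u| :=
      setIntegral_nonneg measurableSet_Ioo fun u _ => abs_nonneg _
    have hCint : IntegrableOn (fun u => |φ u|) (Ioo (0:ℝ) 1) volume := hIφ.abs
    have key : ∀ ε : ℝ, 0 < ε → (∫ u in Ioo (0:ℝ) 1, φ u ^ 2)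
        ≤ ε * ∫ u in Ioo (0:ℝ) 1, |φ u| := by
      intro ε hε
      obtain ⟨p, hp⟩ := exists_polynomial_near_of_continuousOn 0 1 φ hφ ε hε
      have hIp : IntegrableOn (fun u => p.eval u * φ u) (Ioo (0:ℝ) 1) volume :=
        ((p.continuous.continuousOn.mul hφ).integrableOn_Icc).mono_set
          Ioo_subset_Icc_self
      have hsplit : ∫ u in Ioo (0:ℝ) 1, φ u ^ 2
          = ∫ u in Ioo (0:ℝ) 1, (φ u ^ 2 - p.eval u * φ u) := by
        rw [integral_sub hsqint hIp, hpoly p, sub_zero]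
      have hle : ∀ u ∈ Ioo (0:ℝ) 1, φ u ^ 2 - p.eval u * φ u ≤ ε * |φ u| := by
        intro u hu
        have hu' : u ∈ Icc (0:ℝ) 1 := Ioo_subset_Icc_self hu
        have h2 := hp u hu'
        have h3 : φ u ^ 2 - p.eval u * φ u = (φ u - p.eval u) * φ u := by ring
        have h4 : (φ u - p.eval u) * φ u ≤ |φ u - p.eval u| * |φ u| :=
          le_trans (le_abs_self _) (le_of_eq (abs_mul _ _))
        have h5 : |φ u - p.eval u| * |φ u| ≤ ε * |φ u| := by
          apply mul_le_mul_of_nonneg_right _ (abs_nonneg _)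
          rw [abs_sub_comm]; exact h2.le
        linarith
      have hmono2 : ∫ u in Ioo (0:ℝ) 1, (φ u ^ 2 - p.eval u * φ u)
          ≤ ∫ u in Ioo (0:ℝ) 1, ε * |φ u| :=
        setIntegral_mono_on (hsqint.sub hIp) (hCint.const_mul ε) measurableSet_Ioo hle
      rw [MeasureTheory.integral_const_mul] at hmono2
      linarith
    by_contra hne
    have hpos : 0 < ∫ u in Ioo (0:ℝ) 1, φ u ^ 2 := lt_of_le_of_ne hnn (Ne.symm hne)
    have hk := key ((∫ u in Ioo (0:ℝ) 1, φ u ^ 2)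
      / (2 * ((∫ u in Ioo (0:ℝ) 1, |φ u|) + 1))) (by positivity)
    set I := ∫ u in Ioo (0:ℝ) 1, φ u ^ 2
    set C := ∫ u in Ioo (0:ℝ) 1, |φ u|
    rw [div_mul_eq_mul_div, le_div_iff₀ (by positivity)] at hk
    nlinarith
  -- conclude pointwise
  have hae : ∀ᵐ u ∂(volume.restrict (Ioo (0:ℝ) 1)), φ u ^ 2 = 0 := by
    have := (integral_eq_zero_iff_of_nonneg_ae
      (by filter_upwards with u using sq_nonneg _) hsqint).1 hsq
    filter_upwards [this] with u hu using hu
  intro u₀ hu₀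
  by_contra hne
  have hsqpos : 0 < φ u₀ ^ 2 := by positivity
  -- find a neighborhood where φ² > 0
  have hcw : ContinuousWithinAt (fun u => φ u ^ 2) (Icc 0 1) u₀ := ((hφ.pow 2) u₀ hu₀)
  have hev : ∀ᶠ u in nhdsWithin u₀ (Icc 0 1), 0 < φ u ^ 2 :=
    hcw.eventually (eventually_gt_nhds hsqpos)
  rw [eventually_nhdsWithin_iff] at hev
  obtain ⟨δ, hδ, hball⟩ := Metric.eventually_nhds_iff.1 hev
  set a : ℝ := max 0 (u₀ - δ/2)
  set b : ℝ := min 1 (u₀ + δ/2)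
  have hab : a < b := by
    have h1 := hu₀.1; have h2 := hu₀.2
    simp only [a, b, max_lt_iff, lt_min_iff]
    constructor <;> constructor <;> [linarith; linarith; linarith; linarith]
  have hsub : Ioo a b ⊆ {u | u ∈ Ioo (0:ℝ) 1 ∧ φ u ^ 2 ≠ 0} := by
    intro u hu
    have hu1 : 0 < u := lt_of_le_of_lt (le_max_left _ _) hu.1
    have hu2 : u < 1 := lt_of_lt_of_le hu.2 (min_le_left _ _)
    have hd : dist u u₀ < δ := by
      rw [Real.dist_eq, abs_lt]
      have := lt_of_le_of_lt (le_max_right _ _) hu.1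
      have := lt_of_lt_of_le hu.2 (min_le_right _ _)
      constructor <;> linarith
    have : 0 < φ u ^ 2 := hball hd ⟨hu1.le, hu2.le⟩
    exact ⟨⟨hu1, hu2⟩, this.ne'⟩
  have hnull : volume.restrict (Ioo (0:ℝ) 1) {u | φ u ^ 2 ≠ 0} = 0 := by
    rw [← compl_setOf]  -- maybe not needed
    exact hae
  have h1 : volume.restrict (Ioo (0:ℝ) 1) (Ioo a b) = 0 := by
    apply measure_mono_null _ hnull
    intro u hu; exact (hsub hu).2
  rw [Measure.restrict_apply measurableSet_Ioo] at h1
  have h2 : Ioo a b ∩ Ioo (0:ℝ) 1 = Ioo a b := by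
    apply inter_eq_self_of_subset_left
    intro u hu; exact (hsub hu).1
  rw [h2, Real.volume_Ioo] at h1
  have : (0:ℝ) < b - a := by linarith
  simp [ENNReal.ofReal_eq_zero] at h1
  linarith

lemma integrable_conj' {α : Type*} [MeasurableSpace α] {μ : Measure α} {h : α → ℂ}
    (hi : Integrable h μ) : Integrable (fun x => (starRingEnd ℂ) (h x)) μ := by
  refine hi.norm.mono' (Complex.continuous_conj.comp_aestronglyMeasurable hi.1) ?_
  filter_upwards with x; simp

lemma hlr_main (f : ℝ → ℂ) (hf : Integrable f volume)
    (hzero : ∫ x in Set.Ioi (0 : ℝ), f x = 0)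
    (hlog : IntegrableOn
      (fun p : ℝ × ℝ => ‖f p.1‖ * ‖f p.2‖ * |Real.log (p.1 + p.2)|)
      (Set.Ioi (0 : ℝ) ×ˢ Set.Ioi (0 : ℝ)) volume) :
    (∫ x in Set.Ioi (0 : ℝ), ∫ y in Set.Ioi (0 : ℝ),
        (starRingEnd ℂ) (f x) * ((Real.log (1 / (x + y)) : ℝ) : ℂ) * f y) =
      ((∫ τ in Set.Ioi (0 : ℝ), τ⁻¹ *
          ‖∫ x in Set.Ioi (0 : ℝ), ((Real.exp (-(τ * x)) : ℝ) : ℂ) * f x‖ ^ 2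
        : ℝ) : ℂ) ∧
    Integrable (fun τ => τ⁻¹ *
          ‖∫ x in Set.Ioi (0 : ℝ), ((Real.exp (-(τ * x)) : ℝ) : ℂ) * f x‖ ^ 2)
      (volume.restrict (Set.Ioi (0:ℝ))) := by
  set μ0 : Measure ℝ := volume.restrict (Ioi (0:ℝ)) with hμ0
  set P : Measure (ℝ × ℝ) := μ0.prod μ0 with hP
  set F : ℝ → ℂ := fun τ => ∫ x in Ioi (0:ℝ), ((Real.exp (-(τ * x)) : ℝ) : ℂ) * f x with hFdef
  set r : ℝ → ℝ := fun τ => τ⁻¹ * ‖F τ‖^2 with hrdef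
  set g : ℝ × ℝ → ℝ → ℂ :=
    fun p τ => (starRingEnd ℂ) (f p.1) * f p.2 * ((hlrK (p.1 + p.2) τ : ℝ) : ℂ) with hgdef
  -- measurability of the triple integrand
  have hfm : AEStronglyMeasurable f μ0 := hf.aestronglyMeasurable.restrict
  have qmp1 : Measure.QuasiMeasurePreserving (fun q : (ℝ × ℝ) × ℝ => q.1.1) (P.prod μ0) μ0 :=
    (Measure.quasiMeasurePreserving_fst (μ := μ0) (ν := μ0)).comp
      (Measure.quasiMeasurePreserving_fst (μ := P) (ν := μ0))
  have qmp2 : Measure.QuasiMeasurePreserving (fun q : (ℝ × ℝ) × ℝ => q.1.2) (P.prod μ0) μ0 :=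
    (Measure.quasiMeasurePreserving_snd (μ := μ0) (ν := μ0)).comp
      (Measure.quasiMeasurePreserving_fst (μ := P) (ν := μ0))
  have hm1 : AEStronglyMeasurable (fun q : (ℝ × ℝ) × ℝ => f q.1.1) (P.prod μ0) :=
    hfm.comp_quasiMeasurePreserving qmp1
  have hm2 : AEStronglyMeasurable (fun q : (ℝ × ℝ) × ℝ => f q.1.2) (P.prod μ0) :=
    hfm.comp_quasiMeasurePreserving qmp2
  have hmK : Measurable (fun q : (ℝ × ℝ) × ℝ => ((hlrK (q.1.1 + q.1.2) q.2 : ℝ) : ℂ)) := by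
    apply Complex.measurable_ofReal.comp
    unfold hlrK
    exact ((Real.measurable_exp.comp
        ((measurable_snd.mul ((measurable_fst.fst).add (measurable_fst.snd))).neg)).sub
      (Real.measurable_exp.comp measurable_snd.neg)).div measurable_snd
  have hgm : AEStronglyMeasurable (Function.uncurry g) (P.prod μ0) := by
    exact ((Complex.continuous_conj.comp_aestronglyMeasurable hm1).mul hm2).mul
      hmK.aestronglyMeasurable
  -- a.e. membership
  have hPr : P = (volume.prod volume).restrict (Ioi (0:ℝ) ×ˢ Ioi (0:ℝ)) := by
    rw [hP, hμ0, Measure.prod_restrict]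
  have hmem : ∀ᵐ p ∂P, p ∈ Ioi (0:ℝ) ×ˢ Ioi (0:ℝ) := by
    rw [hPr]; exact ae_restrict_mem (measurableSet_Ioi.prod measurableSet_Ioi)
  -- sections and norm-integrals
  have hsec : ∀ p : ℝ × ℝ, p ∈ Ioi (0:ℝ) ×ˢ Ioi (0:ℝ) →
      Integrable (g p) μ0 ∧
      (∫ τ, ‖g p τ‖ ∂μ0)
        = ‖f p.1‖ * ‖f p.2‖ * |Real.log (p.1 + p.2)| := by
    intro p hp
    have hc : 0 < p.1 + p.2 := add_pos hp.1 hp.2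
    have hK := hlrK_props hc
    have hKC : Integrable (fun τ => ((hlrK (p.1 + p.2) τ : ℝ) : ℂ)) μ0 := hK.1.ofReal
    refine ⟨hKC.const_mul _, ?_⟩
    have hnorm : ∀ τ : ℝ, ‖g p τ‖
        = (‖f p.1‖ * ‖f p.2‖) * |hlrK (p.1 + p.2) τ| := by
      intro τ
      simp only [hgdef, norm_mul, Complex.norm_conj, Complex.norm_real, Real.norm_eq_abs]
    calc (∫ τ, ‖g p τ‖ ∂μ0)
        = ∫ τ, (‖f p.1‖ * ‖f p.2‖) * |hlrK (p.1 + p.2) τ| ∂μ0 :=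
          integral_congr_ae (by filter_upwards with τ using hnorm τ)
      _ = (‖f p.1‖ * ‖f p.2‖) * ∫ τ, |hlrK (p.1 + p.2) τ| ∂μ0 :=
          MeasureTheory.integral_const_mul _ _
      _ = ‖f p.1‖ * ‖f p.2‖ * |Real.log (p.1 + p.2)| := by
          rw [hμ0, hK.2.2]
  -- integrability of the triple integrand
  have hgint : Integrable (Function.uncurry g) (P.prod μ0) := by
    rw [integrable_prod_iff hgm]
    constructor
    · filter_upwards [hmem] with p hp; exact (hsec p hp).1
    · have hlog' : Integrable
          (fun p : ℝ × ℝ => ‖f p.1‖ * ‖f p.2‖ * |Real.log (p.1 + p.2)|)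
          P := by
        rw [hPr, ← Measure.volume_eq_prod]; exact hlog
      exact hlog'.congr
        (by filter_upwards [hmem] with p hp using ((hsec p hp).2).symm)
  -- inner τ-integral
  have hinner1 : ∀ᵐ p ∂P, (∫ τ, g p τ ∂μ0)
      = (starRingEnd ℂ) (f p.1) * ((Real.log (1 / (p.1 + p.2)) : ℝ) : ℂ) * f p.2 := by
    filter_upwards [hmem] with p hp
    have hc : 0 < p.1 + p.2 := add_pos hp.1 hp.2
    have hK := hlrK_props hc
    calc (∫ τ, g p τ ∂μ0)
        = (starRingEnd ℂ) (f p.1) * f p.2 * ∫ τ, ((hlrK (p.1 + p.2) τ : ℝ) : ℂ) ∂μ0 :=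
          MeasureTheory.integral_const_mul _ _
      _ = (starRingEnd ℂ) (f p.1) * f p.2 * ((-Real.log (p.1 + p.2) : ℝ) : ℂ) := by
          have hcast : (∫ τ, ((hlrK (p.1 + p.2) τ : ℝ) : ℂ) ∂μ0)
              = ((∫ τ, hlrK (p.1 + p.2) τ ∂μ0 : ℝ) : ℂ) := integral_ofReal
          rw [hcast, hμ0, hK.2.1]
      _ = (starRingEnd ℂ) (f p.1) * ((Real.log (1 / (p.1 + p.2)) : ℝ) : ℂ) * f p.2 := by
          rw [one_div, Real.log_inv]; ring
  have hW : Integrable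
      (fun p : ℝ × ℝ =>
        (starRingEnd ℂ) (f p.1) * ((Real.log (1 / (p.1 + p.2)) : ℝ) : ℂ) * f p.2) P :=
    (hgint.integral_prod_left).congr hinner1
  have hLHS1 : (∫ x in Set.Ioi (0 : ℝ), ∫ y in Set.Ioi (0 : ℝ),
        (starRingEnd ℂ) (f x) * ((Real.log (1 / (x + y)) : ℝ) : ℂ) * f y)
      = ∫ p, (starRingEnd ℂ) (f p.1) * ((Real.log (1 / (p.1 + p.2)) : ℝ) : ℂ) * f p.2 ∂P :=
    (integral_prod _ hW).symm
  have hLHS2 : (∫ p, (starRingEnd ℂ) (f p.1) * ((Real.log (1 / (p.1 + p.2)) : ℝ) : ℂ) * f p.2 ∂P)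
      = ∫ p, (∫ τ, g p τ ∂μ0) ∂P := (integral_congr_ae hinner1).symm
  have hswap : (∫ p, (∫ τ, g p τ ∂μ0) ∂P) = ∫ τ, (∫ p, g p τ ∂P) ∂μ0 :=
    integral_integral_swap hgint
  -- integrability of exp-weighted f
  have hfint : Integrable f μ0 := hf.integrableOn
  have hexpf : ∀ τ : ℝ, 0 < τ →
      Integrable (fun x => ((Real.exp (-(τ * x)) : ℝ) : ℂ) * f x) μ0 := by
    intro τ hτ
    refine hfint.norm.mono'
      ((((Complex.measurable_ofReal.comp (Real.measurable_exp.comp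
        ((measurable_id.const_mul τ).neg)))).aestronglyMeasurable).mul hfm) ?_
    filter_upwards [ae_restrict_mem measurableSet_Ioi] with x (hx : 0 < x)
    rw [norm_mul, Complex.norm_real, Real.norm_eq_abs, abs_of_nonneg (Real.exp_pos _).le]
    have h1 : Real.exp (-(τ * x)) ≤ 1 := Real.exp_le_one_iff.2 (by nlinarith)
    nlinarith [norm_nonneg (f x)]
  -- inner (x,y)-integral for fixed τ
  have hinner2 : ∀ᵐ τ ∂μ0, (∫ p, g p τ ∂P) = ((r τ : ℝ) : ℂ) := by
    filter_upwards [ae_restrict_mem measurableSet_Ioi] with τ (hτ : 0 < τ)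
    have hA : Integrable (fun p : ℝ × ℝ =>
        (starRingEnd ℂ) (((Real.exp (-(τ * p.1)) : ℝ) : ℂ) * f p.1)
          * (((Real.exp (-(τ * p.2)) : ℝ) : ℂ) * f p.2)) P :=
      (integrable_conj' (hexpf τ hτ)).mul_prod (hexpf τ hτ)
    have hB : Integrable (fun p : ℝ × ℝ =>
        ((Real.exp (-τ) : ℝ) : ℂ) * ((starRingEnd ℂ) (f p.1) * f p.2)) P :=
      ((integrable_conj' hfint).mul_prod hfint).const_mul _
    have hpt : ∀ p : ℝ × ℝ, g p τ
        = ((τ⁻¹ : ℝ) : ℂ) * ((starRingEnd ℂ) (((Real.exp (-(τ * p.1)) : ℝ) : ℂ) * f p.1)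
              * (((Real.exp (-(τ * p.2)) : ℝ) : ℂ) * f p.2)
            - ((Real.exp (-τ) : ℝ) : ℂ) * ((starRingEnd ℂ) (f p.1) * f p.2)) := by
      intro p
      simp only [hgdef, hlrK]
      have hsplit : Real.exp (-(τ * (p.1 + p.2)))
          = Real.exp (-(τ * p.1)) * Real.exp (-(τ * p.2)) := by
        rw [← Real.exp_add]; ring_nf
      rw [hsplit]
      simp only [map_mul, Complex.conj_ofReal]
      push_cast
      have hτne : (τ : ℂ) ≠ 0 := by exact_mod_cast hτ.ne'
      field_simp
    calc (∫ p, g p τ ∂P)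
        = ∫ p, ((τ⁻¹ : ℝ) : ℂ) * ((starRingEnd ℂ) (((Real.exp (-(τ * p.1)) : ℝ) : ℂ) * f p.1)
              * (((Real.exp (-(τ * p.2)) : ℝ) : ℂ) * f p.2)
            - ((Real.exp (-τ) : ℝ) : ℂ) * ((starRingEnd ℂ) (f p.1) * f p.2)) ∂P :=
          integral_congr_ae (by filter_upwards with p using hpt p)
      _ = ((τ⁻¹ : ℝ) : ℂ) * ((∫ p, (starRingEnd ℂ) (((Real.exp (-(τ * p.1)) : ℝ) : ℂ) * f p.1)
              * (((Real.exp (-(τ * p.2)) : ℝ) : ℂ) * f p.2) ∂P)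
            - ∫ p, ((Real.exp (-τ) : ℝ) : ℂ) * ((starRingEnd ℂ) (f p.1) * f p.2) ∂P) := by
          rw [MeasureTheory.integral_const_mul, integral_sub hA hB]
      _ = ((r τ : ℝ) : ℂ) := by
          rw [integral_prod_mul (fun x => (starRingEnd ℂ) (((Real.exp (-(τ * x)) : ℝ) : ℂ) * f x))
            (fun y => ((Real.exp (-(τ * y)) : ℝ) : ℂ) * f y)]
          rw [MeasureTheory.integral_const_mul,
            integral_prod_mul (fun x => (starRingEnd ℂ) (f x)) f]
          rw [integral_conj, integral_conj]
          have hz : (∫ x, f x ∂μ0) = 0 := hzero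
          rw [hz]
          simp only [map_zero, zero_mul, mul_zero, sub_zero]
          rw [Complex.conj_mul', hrdef]
          norm_cast
  have hRHS : (∫ τ, (∫ p, g p τ ∂P) ∂μ0) = ((∫ τ, r τ ∂μ0 : ℝ) : ℂ) := by
    rw [integral_congr_ae hinner2]
    exact integral_ofReal
  have h1 : Integrable (fun τ => ∫ p, g p τ ∂P) μ0 := hgint.integral_prod_right
  have h2 : Integrable (fun τ => ((r τ : ℝ) : ℂ)) μ0 := h1.congr hinner2
  have hrint : Integrable r μ0 := by
    refine h2.re.congr ?_
    filter_upwards with τ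
    simp
  exact ⟨by rw [hLHS1, hLHS2, hswap, hRHS], hrint⟩






lemma laplace_zero (f : ℝ → ℂ) (hf : Integrable f volume)
    (hsupp : ∀ x : ℝ, x < 0 → f x = 0)
    (hzero : ∫ x in Ioi (0:ℝ), f x = 0)
    (hF : ∀ τ : ℝ, 0 < τ → ∫ x in Ioi (0:ℝ), ((Real.exp (-(τ * x)) : ℝ) : ℂ) * f x = 0) :
    f =ᵐ[(volume : Measure ℝ)] 0 := by
  set μ0 : Measure ℝ := volume.restrict (Ioi (0:ℝ)) with hμ0
  set G : ℝ → ℂ := fun x => ∫ t in (0:ℝ)..x, f t with hGdef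
  have hfm : AEStronglyMeasurable f μ0 := hf.aestronglyMeasurable.restrict
  have hIi : ∀ a b : ℝ, IntervalIntegrable f volume a b := fun a b => hf.intervalIntegrable
  have hGc : Continuous G := intervalIntegral.continuous_primitive hIi 0
  have hGbd : ∀ x : ℝ, ‖G x‖ ≤ ∫ t, ‖f t‖ := by
    intro x
    rcases le_total 0 x with h | h
    · calc ‖G x‖ ≤ ∫ t in (0:ℝ)..x, ‖f t‖ := intervalIntegral.norm_integral_le_integral_norm h
        _ = ∫ t in Ioc 0 x, ‖f t‖ := intervalIntegral.integral_of_le h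
        _ ≤ ∫ t, ‖f t‖ := setIntegral_le_integral hf.norm
            (by filter_upwards with t using norm_nonneg _)
    · have hsymm : G x = -∫ t in x..(0:ℝ), f t := (intervalIntegral.integral_symm x 0)
      rw [hsymm, norm_neg]
      calc ‖∫ t in x..(0:ℝ), f t‖ ≤ ∫ t in x..(0:ℝ), ‖f t‖ :=
            intervalIntegral.norm_integral_le_integral_norm h
        _ = ∫ t in Ioc x 0, ‖f t‖ := intervalIntegral.integral_of_le h
        _ ≤ ∫ t, ‖f t‖ := setIntegral_le_integral hf.norm
            (by filter_upwards with t using norm_nonneg _)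
  have hGtend : Tendsto G atTop (nhds 0) := by
    have := intervalIntegral_tendsto_integral_Ioi 0 hf.integrableOn tendsto_id
    rwa [hzero] at this
  have hGneg : ∀ x : ℝ, x ≤ 0 → G x = 0 := by
    intro x hx
    have hae : ∀ᵐ t ∂(volume.restrict (Ioc x 0)), f t = 0 := by
      rw [ae_restrict_iff' measurableSet_Ioc]
      have h0 : ∀ᵐ t : ℝ ∂volume, t ≠ 0 := by
        rw [ae_iff]
        simpa using Real.volume_singleton
      filter_upwards [h0] with t ht htm
      exact hsupp t (lt_of_le_of_ne htm.2 ht)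
    have hz2 : (∫ t in Ioc x 0, f t) = 0 := by
      rw [integral_congr_ae hae]; simp
    have hsymm : G x = -∫ t in x..(0:ℝ), f t := intervalIntegral.integral_symm x 0
    rw [hsymm, intervalIntegral.integral_of_le hx, hz2, neg_zero]
  -- Laplace transform of G vanishes
  have hLG : ∀ τ : ℝ, 0 < τ → (∫ x, ((Real.exp (-(τ * x)) : ℝ) : ℂ) * G x ∂μ0) = 0 := by
    intro τ hτ
    set u : ℝ × ℝ → ℂ :=
      fun q => indicator {q : ℝ × ℝ | q.2 ≤ q.1}
        (fun q => ((Real.exp (-(τ * q.1)) : ℝ) : ℂ) * f q.2) q with hudef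
    have humeas : AEStronglyMeasurable u (μ0.prod μ0) := by
      apply AEStronglyMeasurable.indicator _ (measurableSet_le measurable_snd measurable_fst)
      exact ((Complex.measurable_ofReal.comp (Real.measurable_exp.comp
          ((measurable_fst.const_mul τ).neg))).aestronglyMeasurable).mul
        (hfm.comp_quasiMeasurePreserving (Measure.quasiMeasurePreserving_snd))
    have huint : Integrable u (μ0.prod μ0) := by
      refine Integrable.mono' (((integrableOn_exp_Ioi τ hτ 0)).mul_prod hf.integrableOn.norm)
        humeas ?_
      filter_upwards with q
      simp only [hudef]
      by_cases hq : q ∈ {q : ℝ × ℝ | q.2 ≤ q.1}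
      · rw [indicator_of_mem hq, norm_mul, Complex.norm_real, Real.norm_eq_abs,
          abs_of_nonneg (Real.exp_pos _).le]
      · rw [indicator_of_notMem hq, norm_zero]
        positivity
    have hswap : (∫ x, (∫ y, u (x, y) ∂μ0) ∂μ0) = ∫ y, (∫ x, u (x, y) ∂μ0) ∂μ0 :=
      integral_integral_swap (f := fun x y => u (x, y)) huint
    have hxsec : ∀ x : ℝ, x ∈ Ioi (0:ℝ) →
        (∫ y, u (x, y) ∂μ0) = ((Real.exp (-(τ * x)) : ℝ) : ℂ) * G x := by
      intro x hx
      have h1 : (fun y => u (x, y))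
          = indicator (Iic x) (fun y => ((Real.exp (-(τ * x)) : ℝ) : ℂ) * f y) := by
        funext y
        simp only [hudef, Set.indicator_apply, mem_setOf_eq, mem_Iic]
      rw [h1, integral_indicator measurableSet_Iic, hμ0,
        Measure.restrict_restrict measurableSet_Iic, inter_comm, Ioi_inter_Iic,
        MeasureTheory.integral_const_mul]
      congr 1
      exact (intervalIntegral.integral_of_le (le_of_lt hx)).symm
    have hysec : ∀ y : ℝ, y ∈ Ioi (0:ℝ) →
        (∫ x, u (x, y) ∂μ0)
          = ((τ⁻¹ : ℝ) : ℂ) * (((Real.exp (-(τ * y)) : ℝ) : ℂ) * f y) := by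
      intro y hy
      have h1 : (fun x => u (x, y))
          = indicator (Ici y) (fun x => ((Real.exp (-(τ * x)) : ℝ) : ℂ) * f y) := by
        funext x
        simp only [hudef, Set.indicator_apply, mem_setOf_eq, mem_Ici]
      rw [h1, integral_indicator measurableSet_Ici, hμ0,
        Measure.restrict_restrict measurableSet_Ici]
      have h2 : Ici y ∩ Ioi (0:ℝ) = Ici y :=
        inter_eq_self_of_subset_left (fun z hz => mem_Ioi.2 (lt_of_lt_of_le hy hz))
      rw [h2, MeasureTheory.integral_mul_const]
      have h3 : (∫ x in Ici y, ((Real.exp (-(τ * x)) : ℝ) : ℂ))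
          = ((Real.exp (-(τ * y)) / τ : ℝ) : ℂ) := by
        have h4 : (∫ x in Ici y, ((Real.exp (-(τ * x)) : ℝ) : ℂ))
            = (((∫ x in Ici y, Real.exp (-(τ * x))) : ℝ) : ℂ) := integral_ofReal
        rw [h4, MeasureTheory.integral_Ici_eq_integral_Ioi, integral_exp_Ioi τ hτ]
      rw [h3]
      push_cast
      have hτc : (τ : ℂ) ≠ 0 := by exact_mod_cast hτ.ne'
      field_simp
    have hL : (∫ x, (∫ y, u (x, y) ∂μ0) ∂μ0)
        = ∫ x, ((Real.exp (-(τ * x)) : ℝ) : ℂ) * G x ∂μ0 := by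
      refine integral_congr_ae ?_
      filter_upwards [ae_restrict_mem measurableSet_Ioi] with x hx using hxsec x hx
    have hR : (∫ y, (∫ x, u (x, y) ∂μ0) ∂μ0) = 0 := by
      have : (∫ y, (∫ x, u (x, y) ∂μ0) ∂μ0)
          = ∫ y, ((τ⁻¹ : ℝ) : ℂ) * (((Real.exp (-(τ * y)) : ℝ) : ℂ) * f y) ∂μ0 := by
        refine integral_congr_ae ?_
        filter_upwards [ae_restrict_mem measurableSet_Ioi] with y hy using hysec y hy
      rw [this, MeasureTheory.integral_const_mul]
      have := hF τ hτ
      rw [hμ0, this, mul_zero]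
    rw [← hL, hswap, hR]
  -- substitution: moments of hfun vanish
  have himg : (fun x : ℝ => Real.exp (-x)) '' (Ioi 0) = Ioo 0 1 := by
    ext v
    constructor
    · rintro ⟨x, hx, rfl⟩
      exact ⟨Real.exp_pos _, by rw [Real.exp_lt_one_iff]; simpa using hx⟩
    · rintro ⟨h1, h2⟩
      refine ⟨-Real.log v, ?_, ?_⟩
      · simpa using Real.log_neg h1 h2
      · show Real.exp (-(-Real.log v)) = v
        rw [neg_neg, Real.exp_log h1]
  have hmomC : ∀ n : ℕ, (∫ v in Ioo (0:ℝ) 1, ((v : ℂ) ^ n) * G (-Real.log v)) = 0 := by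
    intro n
    have hderiv : ∀ x ∈ Ioi (0:ℝ),
        HasDerivWithinAt (fun x : ℝ => Real.exp (-x)) (-Real.exp (-x)) (Ioi 0) x := by
      intro x _
      have h1 : HasDerivAt (fun x : ℝ => Real.exp (-x)) (Real.exp (-x) * (-1)) x :=
        (Real.hasDerivAt_exp (-x)).comp x (hasDerivAt_neg x)
      simpa using h1.hasDerivWithinAt
    have hinj : InjOn (fun x : ℝ => Real.exp (-x)) (Ioi 0) := by
      intro a _ b _ hab
      have := Real.exp_injective hab
      linarith [neg_injective this]
    have hsub := integral_image_eq_integral_abs_deriv_smul measurableSet_Ioi hderiv hinj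
      (fun v => ((v : ℂ) ^ n) * G (-Real.log v))
    rw [himg] at hsub
    rw [hsub]
    have hptw : EqOn (fun x : ℝ => |(-Real.exp (-x))| • (((Real.exp (-x) : ℂ)) ^ n
          * G (-Real.log (Real.exp (-x)))))
        (fun x : ℝ => ((Real.exp (-((( n : ℝ) + 1) * x)) : ℝ) : ℂ) * G x) (Ioi 0) := by
      intro x _
      simp only
      rw [abs_neg, abs_of_nonneg (Real.exp_pos _).le, Real.log_exp, neg_neg, Complex.real_smul,
        ← mul_assoc, ← Complex.ofReal_pow, ← Complex.ofReal_mul]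
      congr 2
      rw [← Real.exp_nat_mul, ← Real.exp_add]
      congr 1
      ring
    rw [setIntegral_congr_fun measurableSet_Ioi hptw]
    exact hLG ((n : ℝ) + 1) (by positivity)
  -- the function hfun
  set hfun : ℝ → ℂ := fun v => if 0 < v then G (-Real.log v) else 0 with hhdef
  have hhmeas : Measurable hfun :=
    Measurable.ite measurableSet_Ioi (hGc.measurable.comp Real.measurable_log.neg)
      measurable_const
  have hMnn : 0 ≤ ∫ t, ‖f t‖ := integral_nonneg fun t => norm_nonneg _
  have hhbd : ∀ v : ℝ, ‖hfun v‖ ≤ ∫ t, ‖f t‖ := by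
    intro v
    simp only [hhdef]
    by_cases hv : 0 < v
    · rw [if_pos hv]; exact hGbd _
    · rw [if_neg hv, norm_zero]; exact hMnn
  have hhcont : ContinuousOn hfun (Icc 0 1) := by
    intro v hv
    rcases eq_or_lt_of_le hv.1 with h0 | h0
    · -- v = 0
      have hftend : Tendsto hfun (nhdsWithin 0 (Ioi 0)) (nhds 0) := by
        have h1 : Tendsto (fun v : ℝ => -Real.log v) (nhdsWithin 0 (Ioi 0)) atTop :=
          tendsto_neg_atBot_atTop.comp Real.tendsto_log_nhdsGT_zero
        refine (hGtend.comp h1).congr' ?_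
        filter_upwards [self_mem_nhdsWithin] with w hw
        simp only [hhdef]
        exact (if_pos hw).symm
      have hpure : Tendsto hfun (nhdsWithin 0 {(0:ℝ)}) (nhds 0) := by
        rw [nhdsWithin_singleton]
        have := tendsto_pure_nhds hfun 0
        rwa [show hfun 0 = 0 by simp [hhdef]] at this
      have hsup : Tendsto hfun (nhdsWithin 0 ({(0:ℝ)} ∪ Ioi 0)) (nhds 0) := by
        rw [nhdsWithin_union]
        exact tendsto_sup.2 ⟨hpure, hftend⟩
      have hcw : ContinuousWithinAt hfun ({(0:ℝ)} ∪ Ioi 0) 0 := by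
        unfold ContinuousWithinAt
        rwa [show hfun 0 = 0 by simp [hhdef]]
      rw [← h0]
      exact hcw.mono (by
        intro w hw
        rcases eq_or_lt_of_le hw.1 with h | h
        · exact Or.inl h.symm
        · exact Or.inr h)
    · -- 0 < v
      have hev : ∀ᶠ w in nhds v, G (-Real.log w) = hfun w := by
        filter_upwards [IsOpen.mem_nhds isOpen_Ioi h0] with w hw
        simp only [hhdef]
        exact (if_pos hw).symm
      have hca : ContinuousAt (fun w => G (-Real.log w)) v :=
        hGc.continuousAt.comp (ContinuousAt.neg (Real.continuousAt_log h0.ne'))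
      exact (hca.congr hev).continuousWithinAt
  -- integrability for moment extraction
  haveI hfin : IsFiniteMeasure (volume.restrict (Ioo (0:ℝ) 1)) := by
    constructor
    rw [Measure.restrict_apply_univ, Real.volume_Ioo]
    exact ENNReal.ofReal_lt_top
  have hintc : ∀ n : ℕ, Integrable (fun v : ℝ => ((v : ℂ)) ^ n * hfun v)
      (volume.restrict (Ioo (0:ℝ) 1)) := by
    intro n
    refine Integrable.mono' (integrable_const (∫ t, ‖f t‖)) ?_ ?_
    · exact (((Complex.measurable_ofReal.pow_const n)).aestronglyMeasurable).mul
        hhmeas.aestronglyMeasurable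
    · filter_upwards [ae_restrict_mem measurableSet_Ioo] with v hv
      rw [norm_mul, norm_pow, Complex.norm_real, Real.norm_eq_abs, abs_of_nonneg hv.1.le]
      calc v ^ n * ‖hfun v‖ ≤ 1 * ‖hfun v‖ := by
            apply mul_le_mul_of_nonneg_right _ (norm_nonneg _)
            exact pow_le_one₀ hv.1.le hv.2.le
        _ = ‖hfun v‖ := one_mul _
        _ ≤ ∫ t, ‖f t‖ := hhbd v
  have hmomh : ∀ n : ℕ, (∫ v in Ioo (0:ℝ) 1, ((v : ℂ)) ^ n * hfun v) = 0 := by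
    intro n
    rw [← hmomC n]
    refine integral_congr_ae ?_
    filter_upwards [ae_restrict_mem measurableSet_Ioo] with v hv
    simp only [hhdef]
    rw [if_pos hv.1]
  have hre : ∀ v ∈ Icc (0:ℝ) 1, (hfun v).re = 0 := by
    refine moments_zero (fun v => (hfun v).re) ?_ ?_
    · exact Complex.continuous_re.comp_continuousOn hhcont
    intro n
    have h1 := Complex.reCLM.integral_comp_comm (hintc n)
    rw [hmomh n] at h1
    simp only [Complex.reCLM_apply, map_zero] at h1
    refine Eq.trans (integral_congr_ae ?_) h1
    filter_upwards with v
    simp [← Complex.ofReal_pow]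
  have him : ∀ v ∈ Icc (0:ℝ) 1, (hfun v).im = 0 := by
    refine moments_zero (fun v => (hfun v).im) ?_ ?_
    · exact Complex.continuous_im.comp_continuousOn hhcont
    intro n
    have h1 := Complex.imCLM.integral_comp_comm (hintc n)
    rw [hmomh n] at h1
    simp only [Complex.imCLM_apply, map_zero] at h1
    refine Eq.trans (integral_congr_ae ?_) h1
    filter_upwards with v
    simp [← Complex.ofReal_pow]
  -- G vanishes identically
  have hGall : ∀ x : ℝ, G x = 0 := by
    intro x
    rcases le_or_gt x 0 with h | h
    · exact hGneg x h
    · have hv : Real.exp (-x) ∈ Icc (0:ℝ) 1 :=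
        ⟨(Real.exp_pos _).le, Real.exp_le_one_iff.2 (by linarith)⟩
      have h1 : hfun (Real.exp (-x)) = G x := by
        simp only [hhdef]
        simp only [if_pos (Real.exp_pos (-x)), Real.log_exp, neg_neg]
      have h2 : hfun (Real.exp (-x)) = 0 :=
        Complex.ext (hre _ hv) (him _ hv)
      rw [← h1, h2]
  -- Lebesgue differentiation
  have hdiff := IsUnifLocDoublingMeasure.ae_tendsto_average (volume : Measure ℝ)
    hf.locallyIntegrable 1
  filter_upwards [hdiff] with x hx
  have hδpos : ∀ j : ℕ, (0:ℝ) < 1 / ((j:ℝ) + 1) := fun j => by positivity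
  have hδ : Tendsto (fun j : ℕ => 1 / ((j:ℝ) + 1)) atTop (nhdsWithin 0 (Ioi 0)) := by
    apply tendsto_nhdsWithin_of_tendsto_nhds_of_eventually_within
    · exact tendsto_one_div_add_atTop_nhds_zero_nat
    · filter_upwards with j
      exact mem_Ioi.2 (hδpos j)
  have hballs : ∀ᶠ j : ℕ in atTop, x ∈ Metric.closedBall x (1 * (1 / ((j:ℝ) + 1))) := by
    filter_upwards with j
    exact Metric.mem_closedBall_self (by positivity)
  have htend := hx (ι := ℕ) (l := atTop) (fun _ => x) (fun j : ℕ => 1 / ((j:ℝ) + 1)) hδ hballs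
  have hav : ∀ j : ℕ, (⨍ y in Metric.closedBall x (1 / ((j:ℝ) + 1)), f y) = 0 := by
    intro j
    set δ : ℝ := 1 / ((j:ℝ) + 1) with hδdef
    have hδ0 : 0 < δ := hδpos j
    rw [Real.closedBall_eq_Icc, setAverage_eq]
    have hzint : (∫ y in Icc (x - δ) (x + δ), f y) = 0 := by
      rw [MeasureTheory.integral_Icc_eq_integral_Ioc,
        ← intervalIntegral.integral_of_le (by linarith : x - δ ≤ x + δ)]
      have h5 : (∫ y in (x - δ)..(x + δ), f y) = G (x + δ) - G (x - δ) :=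
        (intervalIntegral.integral_interval_sub_left (hIi 0 (x + δ)) (hIi 0 (x - δ))).symm
      rw [h5, hGall (x + δ), hGall (x - δ), sub_zero]
    rw [hzint, smul_zero]
  have htend0 : Tendsto (fun _ : ℕ => (0:ℂ)) atTop (nhds (f x)) := by
    refine htend.congr fun j => hav j
  have := tendsto_nhds_unique htend0 tendsto_const_nhds
  simpa using this


/-- Logarithmic representation formula on the half-line: for `f ∈ L¹(ℝ)` supported in
`[0,∞)` with `∫_0^∞ f = 0` and `∬ |f(x)||f(y)||log(x+y)| dx dy < ∞`,
`∬ conj(f(x)) log(1/(x+y)) f(y) dx dy = ∫_0^∞ τ⁻¹ |∫_0^∞ e^{-τx} f(x) dx|² dτ`;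
in particular the left side is real, non-negative, and strictly positive unless
`f = 0` a.e. -/
theorem halfline_log_representation (f : ℝ → ℂ)
    (hf : Integrable f volume)
    (hsupp : ∀ x : ℝ, x < 0 → f x = 0)
    (hzero : ∫ x in Set.Ioi (0 : ℝ), f x = 0)
    (hlog : IntegrableOn
      (fun p : ℝ × ℝ => ‖f p.1‖ * ‖f p.2‖ * |Real.log (p.1 + p.2)|)
      (Set.Ioi (0 : ℝ) ×ˢ Set.Ioi (0 : ℝ)) volume) :
    (∫ x in Set.Ioi (0 : ℝ), ∫ y in Set.Ioi (0 : ℝ),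
        (starRingEnd ℂ) (f x) * ((Real.log (1 / (x + y)) : ℝ) : ℂ) * f y) =
      ((∫ τ in Set.Ioi (0 : ℝ), τ⁻¹ *
          ‖∫ x in Set.Ioi (0 : ℝ), ((Real.exp (-(τ * x)) : ℝ) : ℂ) * f x‖ ^ 2
        : ℝ) : ℂ) ∧
    0 ≤ ∫ τ in Set.Ioi (0 : ℝ), τ⁻¹ *
          ‖∫ x in Set.Ioi (0 : ℝ), ((Real.exp (-(τ * x)) : ℝ) : ℂ) * f x‖ ^ 2 ∧
    (¬ (f =ᵐ[(volume : Measure ℝ)] 0) →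
      0 < ∫ τ in Set.Ioi (0 : ℝ), τ⁻¹ *
          ‖∫ x in Set.Ioi (0 : ℝ), ((Real.exp (-(τ * x)) : ℝ) : ℂ) * f x‖ ^ 2) := by
  obtain ⟨hEq, hrint⟩ := hlr_main f hf hzero hlog
  set μ0 : Measure ℝ := volume.restrict (Ioi (0:ℝ)) with hμ0
  set F : ℝ → ℂ := fun τ => ∫ x in Ioi (0:ℝ), ((Real.exp (-(τ * x)) : ℝ) : ℂ) * f x with hFdef
  have hnonneg : (0:ℝ) ≤ ∫ τ in Ioi (0:ℝ), τ⁻¹ * ‖F τ‖ ^ 2 :=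
    setIntegral_nonneg measurableSet_Ioi fun τ hτ =>
      mul_nonneg (inv_nonneg.2 (le_of_lt hτ)) (sq_nonneg _)
  refine ⟨hEq, hnonneg, ?_⟩
  intro hne
  by_contra hnpos
  push_neg at hnpos
  have hI0 : (∫ τ in Ioi (0:ℝ), τ⁻¹ * ‖F τ‖ ^ 2) = 0 :=
    le_antisymm hnpos hnonneg
  -- integrand vanishes a.e.
  have haer : ∀ᵐ τ ∂μ0, τ⁻¹ * ‖F τ‖ ^ 2 = 0 := by
    have := (integral_eq_zero_iff_of_nonneg_ae ?_ hrint).1 hI0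
    · exact this
    · filter_upwards [ae_restrict_mem measurableSet_Ioi] with τ (hτ : 0 < τ)
      exact mul_nonneg (inv_nonneg.2 hτ.le) (sq_nonneg _)
  have haeF : ∀ᵐ τ ∂μ0, F τ = 0 := by
    filter_upwards [haer, ae_restrict_mem measurableSet_Ioi] with τ h1 (h2 : 0 < τ)
    have h3 : ‖F τ‖ ^ 2 = 0 := by
      have := mul_eq_zero.1 h1
      rcases this with h | h
      · exact absurd h (inv_ne_zero h2.ne')
      · exact h
    have := pow_eq_zero_iff (n := 2) (by norm_num) |>.1 h3
    exact norm_eq_zero.1 this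
  -- continuity of F on Ioi 0
  have hFc : ∀ τ0 : ℝ, 0 < τ0 → ContinuousAt F τ0 := by
    intro τ0 hτ0
    apply continuousAt_of_dominated (bound := fun x => ‖f x‖)
    · filter_upwards with τ
      exact (((Complex.measurable_ofReal.comp (Real.measurable_exp.comp
          ((measurable_id.const_mul τ).neg)))).aestronglyMeasurable).mul
        hf.aestronglyMeasurable.restrict
    · filter_upwards [IsOpen.mem_nhds isOpen_Ioi hτ0] with τ (hτ : 0 < τ)
      filter_upwards [ae_restrict_mem measurableSet_Ioi] with x (hx : 0 < x)
      rw [norm_mul, Complex.norm_real, Real.norm_eq_abs, abs_of_nonneg (Real.exp_pos _).le]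
      have h1 : Real.exp (-(τ * x)) ≤ 1 := Real.exp_le_one_iff.2 (by nlinarith)
      nlinarith [norm_nonneg (f x)]
    · exact hf.integrableOn.norm
    · filter_upwards with x
      apply ContinuousAt.mul _ continuousAt_const
      exact (Complex.continuous_ofReal.comp (Real.continuous_exp.comp
        ((continuous_id.mul continuous_const).neg))).continuousAt
  -- F vanishes everywhere on Ioi 0
  have hFzero : ∀ τ : ℝ, 0 < τ → F τ = 0 := by
    intro τ0 hτ0
    by_contra hFne
    have hev : ∀ᶠ τ in nhds τ0, F τ ≠ 0 ∧ τ ∈ Ioi (0:ℝ) :=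
      ((hFc τ0 hτ0).eventually_ne hFne).and (IsOpen.eventually_mem isOpen_Ioi hτ0)
    obtain ⟨ε, hε, hball⟩ := Metric.eventually_nhds_iff.1 hev
    have hsub : Metric.ball τ0 ε ⊆ {τ | F τ ≠ 0} ∩ Ioi (0:ℝ) := by
      intro τ hτ
      exact (hball (Metric.mem_ball.1 hτ))
    have hnull : μ0 {τ | F τ ≠ 0} = 0 := haeF
    have h1 : μ0 (Metric.ball τ0 ε) = 0 :=
      measure_mono_null (fun τ hτ => (hsub hτ).1) hnull
    rw [hμ0, Measure.restrict_apply measurableSet_ball] at h1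
    have h2 : Metric.ball τ0 ε ∩ Ioi (0:ℝ) = Metric.ball τ0 ε :=
      inter_eq_self_of_subset_left (fun τ hτ => (hsub hτ).2)
    rw [h2, Real.volume_ball] at h1
    simp only [ENNReal.ofReal_eq_zero] at h1
    linarith
  exact hne (laplace_zero f hf hsupp hzero hFzero)

end HLRAux
end
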